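/- Let p be a prime and n ≥ 0 an integer. For j ∈ {0,…,n} define Ω(j) = { m : 0 ≤ m ≤ n and the binomial coefficient C(m,j) is not divisible by p }, and for J ⊆ {0,…,n} set Ω(J) = ⋃_{j∈J} Ω(j). Then Ω is a closure operator on the subsets of {0,1,…,n}: J ⊆ Ω(J) for all J; Ω is monotone; and Ω(Ω(J)) = Ω(J) for all J. -/

import Mathlib

open Nat

lemma digit_choose_not_dvd {p : ℕ} (hp : p.Prime) {d e : ℕ} (hd : d < p) (he : e < p) :
    ¬ p ∣ d.choose e ↔ e ≤ d := by
  constructor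
  · intro h
    by_contra hle
    exact h (by simp [Nat.choose_eq_zero_of_lt (lt_of_not_ge hle)])
  · intro hle hdvd
    have : d.choose e ∣ d ! := by
      have := Nat.choose_mul_factorial_mul_factorial hle
      exact ⟨e ! * (d - e)!, by rw [← this]; ring⟩
    have := hp.dvd_factorial.mp (hdvd.trans this)
    omega

lemma not_dvd_choose_iff {p : ℕ} (hp : p.Prime) (m j : ℕ) :
    ¬ p ∣ m.choose j ↔ ∀ i, j / p ^ i % p ≤ m / p ^ i % p := by
  haveI := Fact.mk hp
  set a := m + j + 1 with ha
  have hm : m < p ^ a := lt_of_lt_of_le (Nat.lt_pow_self (n := m) hp.one_lt)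
    (Nat.pow_le_pow_right hp.pos (by omega))
  have hj : j < p ^ a := lt_of_lt_of_le (Nat.lt_pow_self (n := j) hp.one_lt)
    (Nat.pow_le_pow_right hp.pos (by omega))
  have hluc := Choose.lucas_theorem_nat (p := p) hm hj
  have hdvd : p ∣ m.choose j ↔ p ∣ ∏ i ∈ Finset.range a, (m / p ^ i % p).choose (j / p ^ i % p) := by
    rw [← Nat.modEq_zero_iff_dvd, ← Nat.modEq_zero_iff_dvd]
    exact ⟨hluc.symm.trans, hluc.trans⟩
  rw [hdvd, hp.prime.dvd_finset_prod_iff]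
  push_neg
  constructor
  · intro h i
    by_cases hi : i < a
    · have := h i (Finset.mem_range.mpr hi)
      exact (digit_choose_not_dvd hp (Nat.mod_lt _ hp.pos) (Nat.mod_lt _ hp.pos)).mp this
    · have : j / p ^ i = 0 := Nat.div_eq_of_lt (lt_of_lt_of_le hj
        (Nat.pow_le_pow_right hp.pos (by omega)))
      simp [this]
  · intro h i _
    exact (digit_choose_not_dvd hp (Nat.mod_lt _ hp.pos) (Nat.mod_lt _ hp.pos)).mpr (h i)



/-- The operator `Ω(J) = ⋃_{j ∈ J} { m ≤ n : p ∤ C(m,j) }` on subsets of `{0, 1, …, n}`,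
arising from the automorphic collineations `xᵢ ↦ aⁱxᵢ` of the normal rational curve
over a field of characteristic `p`. -/
def omegaOp (p : ℕ) {n : ℕ} (J : Set (Fin (n + 1))) : Set (Fin (n + 1)) :=
  {m | ∃ j ∈ J, ¬ p ∣ Nat.choose (m : ℕ) (j : ℕ)}

/-- For a prime `p`, `Ω` is a closure operator on the subsets of `{0, 1, …, n}`: it is
extensive, monotone and idempotent (the latter by Lucas' theorem). -/
theorem omegaOp_isClosureOperator (p : ℕ) (hp : p.Prime) (n : ℕ) :
    (∀ J : Set (Fin (n + 1)), J ⊆ omegaOp p J) ∧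
      (∀ J J' : Set (Fin (n + 1)), J ⊆ J' → omegaOp p J ⊆ omegaOp p J') ∧
      (∀ J : Set (Fin (n + 1)), omegaOp p (omegaOp p J) = omegaOp p J) := by
  have ext : ∀ J : Set (Fin (n + 1)), J ⊆ omegaOp p J := by
    intro J j hj
    exact ⟨j, hj, by simp [Nat.choose_self, hp.one_lt.ne']⟩
  have mono : ∀ J J' : Set (Fin (n + 1)), J ⊆ J' → omegaOp p J ⊆ omegaOp p J' := by
    intro J J' hJJ m ⟨j, hj, h⟩
    exact ⟨j, hJJ hj, h⟩
  refine ⟨ext, mono, fun J => Set.Subset.antisymm ?_ (ext _)⟩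
  rintro k ⟨m, ⟨j, hj, hmj⟩, hkm⟩
  refine ⟨j, hj, ?_⟩
  rw [not_dvd_choose_iff hp] at *
  exact fun i => (hmj i).trans (hkm i)
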